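/- If X is a P-space, then every sequence of continuous real-valued functions on X is equicontinuous (at every point of X). -/
import Mathlib


/-- If `X` is a P-space, then every sequence of continuous real-valued functions on `X`
is equicontinuous. -/
theorem stmt_3 {X : Type*} [TopologicalSpace X]
    (hP : ∀ s : ℕ → Set X, (∀ n, IsOpen (s n)) → IsOpen (⋂ n, s n))
    (f : ℕ → C(X, ℝ)) :
    Equicontinuous (fun n => (f n : X → ℝ)) := by
  intro x
  rw [Metric.equicontinuousAt_iff_right]
  intro ε hε
  set U : ℕ → Set X := fun n => {y | dist (f n y) (f n x) < ε} with hU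
  have hopen : ∀ n, IsOpen (U n) :=
    fun n => isOpen_lt (by continuity) continuous_const
  have hOpen := hP U hopen
  refine Filter.eventually_of_mem (hOpen.mem_nhds ?_) ?_
  · exact Set.mem_iInter.2 fun n => by simp [hU, hε]
  · intro y hy n
    exact dist_comm ((f n) y) ((f n) x) ▸ Set.mem_iInter.1 hy n
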